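/- For d ≥ 3 and 1 ≤ k ≤ d-1, the coefficient a_k = 2^{k+1}(2d·C(2d-k-2, d-1) - (d-1)·C(2d-k-1, d-1)) is nonnegative if and only if k ≤ (3d-1)/(d+1). -/
import Mathlib


theorem ak_nonneg_iff (d k : ℕ) (hd : 3 ≤ d) (hk1 : 1 ≤ k) (hk2 : k ≤ d - 1) :
    (0 : ℝ) ≤ 2 ^ (k + 1) *
        (2 * d * Nat.choose (2 * d - k - 2) (d - 1) -
          ((d : ℝ) - 1) * Nat.choose (2 * d - k - 1) (d - 1)) ↔
      (k : ℚ) ≤ (3 * d - 1) / (d + 1) := by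
  have hkd : k + 1 ≤ d := by omega
  have h1 : d - 1 ≤ 2 * d - k - 2 := by omega
  have hc1 : 0 < Nat.choose (2 * d - k - 2) (d - 1) := Nat.choose_pos h1
  -- key identity
  have hid : Nat.choose (2 * d - k - 2) (d - 1) * (2 * d - k - 1)
      = Nat.choose (2 * d - k - 1) (d - 1) * (d - k) := by
    have h := Nat.choose_mul_succ_eq (2 * d - k - 2) (d - 1)
    have e1 : 2 * d - k - 2 + 1 = 2 * d - k - 1 := by omega
    rw [e1] at h
    have e2 : 2 * d - k - 1 - (d - 1) = d - k := by omega
    rw [e2] at h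
    exact h
  set c1 : ℝ := (Nat.choose (2 * d - k - 2) (d - 1) : ℝ) with hc1def
  set c2 : ℝ := (Nat.choose (2 * d - k - 1) (d - 1) : ℝ) with hc2def
  have hc1R : (1 : ℝ) ≤ c1 := by
    rw [hc1def]; exact_mod_cast hc1
  have hc2R : (0 : ℝ) ≤ c2 := Nat.cast_nonneg _
  have hdR : (3 : ℝ) ≤ d := by exact_mod_cast hd
  have hkR : (1 : ℝ) ≤ k := by exact_mod_cast hk1
  have hk2R : (k : ℝ) + 1 ≤ d := by exact_mod_cast hkd
  have e3 : ((2 * d - k - 1 : ℕ) : ℝ) = 2 * d - k - 1 := by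
    have h' : 2 * d - k - 1 + (k + 1) = 2 * d := by omega
    have := congrArg (fun n : ℕ => (n : ℝ)) h'
    push_cast at this
    linarith
  have e4 : ((d - k : ℕ) : ℝ) = (d : ℝ) - k := by
    have h' : d - k + k = d := by omega
    have := congrArg (fun n : ℕ => (n : ℝ)) h'
    push_cast at this
    linarith
  have hidR : c1 * (2 * (d : ℝ) - k - 1) = c2 * ((d : ℝ) - k) := by
    have := congrArg (fun n : ℕ => (n : ℝ)) hid
    simp only [Nat.cast_mul] at this
    rw [e3, e4] at this
    exact this
  -- reduce LHS
  have hL : ((0 : ℝ) ≤ 2 ^ (k + 1) * (2 * d * c1 - ((d : ℝ) - 1) * c2))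
      ↔ ((d : ℝ) - 1) * c2 ≤ 2 * d * c1 := by
    rw [mul_nonneg_iff_of_pos_left (by positivity), sub_nonneg]
  rw [hL]
  -- reduce RHS
  have hdQ : (0 : ℚ) < (d : ℚ) + 1 := by positivity
  rw [le_div_iff₀ hdQ]
  have hdk : (0 : ℝ) < (d : ℝ) - k := by linarith
  have hc1pos : (0 : ℝ) < c1 := by linarith
  constructor
  · intro h
    have hm := mul_le_mul_of_nonneg_right h (le_of_lt hdk)
    -- hm : (d-1)*c2*(d-k) ≤ 2*d*c1*(d-k)
    have e : ((d : ℝ) - 1) * c2 * ((d : ℝ) - k) = c1 * (((d : ℝ) - 1) * (2 * d - k - 1)) := by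
      rw [mul_assoc, ← hidR]; ring
    have e' : 2 * (d : ℝ) * c1 * ((d : ℝ) - k) = c1 * (2 * d * ((d : ℝ) - k)) := by ring
    rw [e, e'] at hm
    have key : ((d : ℝ) - 1) * (2 * d - k - 1) ≤ 2 * d * ((d : ℝ) - k) :=
      le_of_mul_le_mul_left hm hc1pos
    have hN : k * (d + 1) + 1 ≤ 3 * d := by
      have hcast : ((k * (d + 1) + 1 : ℕ) : ℝ) ≤ ((3 * d : ℕ) : ℝ) := by
        push_cast
        nlinarith [key]
      exact_mod_cast hcast
    have hQ : (k : ℚ) * (d + 1) + 1 ≤ 3 * d := by exact_mod_cast hN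
    linarith
  · intro h
    have hN : k * (d + 1) + 1 ≤ 3 * d := by
      have hQ : (k : ℚ) * ((d : ℚ) + 1) + 1 ≤ 3 * d := by linarith
      exact_mod_cast hQ
    have hR : (k : ℝ) * ((d : ℝ) + 1) + 1 ≤ 3 * d := by exact_mod_cast hN
    have key : ((d : ℝ) - 1) * (2 * d - k - 1) ≤ 2 * d * ((d : ℝ) - k) := by nlinarith [hR]
    have hm := mul_le_mul_of_nonneg_left key (le_of_lt hc1pos)
    have e : ((d : ℝ) - 1) * c2 * ((d : ℝ) - k) = c1 * (((d : ℝ) - 1) * (2 * d - k - 1)) := by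
      rw [mul_assoc, ← hidR]; ring
    have e' : 2 * (d : ℝ) * c1 * ((d : ℝ) - k) = c1 * (2 * d * ((d : ℝ) - k)) := by ring
    have h2 : ((d : ℝ) - 1) * c2 * ((d : ℝ) - k) ≤ 2 * d * c1 * ((d : ℝ) - k) := by
      rw [e, e']; exact hm
    exact le_of_mul_le_mul_right h2 hdk
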